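/- Let Q be the equioriented A_n quiver and d a dimension vector with d_0 = d_{n+1} = 0. Define m_{ij} = [min{d_k − d_{i-1}, d_k − d_{j+1} : i ≤ k ≤ j}]_+ for 1 ≤ i ≤ j ≤ n, and let V = ⊕_{i≤j} U_{i,j}^{m_{ij}}. Then for all 1 ≤ i ≤ j ≤ n, the rank r_{ij}(V) of the composite map V_i → V_j in V equals min{d_i, ..., d_j}. -/

import Mathlib

/-- The piecewise-linear multiplicity `m_{ij} = [min {min (d_k - d_{i-1}) (d_k - d_{j+1}) :
i ≤ k ≤ j}]₊` for the rigid representation of the equioriented `Aₙ` quiver. -/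
noncomputable def rigidMult (d : ℕ → ℤ) (i j : ℕ) : ℕ :=
  (max (sInf {x : ℤ | ∃ k, i ≤ k ∧ k ≤ j ∧
    x = min (d k - d (i - 1)) (d k - d (j + 1))}) 0).toNat

/-- The dimension at vertex `l` of the component of `⊕ U_{i,j}^{m_{ij}}` indexed by the
interval `p = (i, j)`: `m_{ij}` if `i ≤ l ≤ j`, else `0`. -/
noncomputable def compDim (d : ℕ → ℤ) (l : ℕ) (p : ℕ × ℕ) : ℕ :=
  if p.1 ≤ l ∧ l ≤ p.2 then rigidMult d p.1 p.2 else 0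

/-- The space at vertex `l` of the representation `V = ⊕_{1 ≤ i ≤ j ≤ n} U_{i,j}^{m_{ij}}`. -/
def rigidSpace (K : Type) [Field K] (n : ℕ) (d : ℕ → ℤ) (l : ℕ) : Type :=
  ∀ p : ↥(Finset.Icc 1 n ×ˢ Finset.Icc 1 n), Fin (compDim d l p) → K

noncomputable instance (K : Type) [Field K] (n : ℕ) (d : ℕ → ℤ) (l : ℕ) :
    AddCommGroup (rigidSpace K n d l) := by unfold rigidSpace; infer_instance

noncomputable instance (K : Type) [Field K] (n : ℕ) (d : ℕ → ℤ) (l : ℕ) :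
    Module K (rigidSpace K n d l) := by unfold rigidSpace; infer_instance

/-- The "rectangular identity" linear map `K^a → K^b`. -/
noncomputable def rectMap (K : Type) [Field K] (a b : ℕ) :
    (Fin a → K) →ₗ[K] (Fin b → K) :=
  Matrix.mulVecLin (Matrix.of fun (p : Fin b) (q : Fin a) =>
    if (p : ℕ) = (q : ℕ) then (1 : K) else 0)

/-- The structure map `V_l → V_{l+1}` of `⊕ U_{i,j}^{m_{ij}}`: componentwise the
identity on intervals containing both `l` and `l+1`, zero otherwise. -/
noncomputable def rigidStructMap (K : Type) [Field K] (n : ℕ) (d : ℕ → ℤ) (l : ℕ) :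
    rigidSpace K n d l →ₗ[K] rigidSpace K n d (l + 1) :=
  LinearMap.pi fun p =>
    (rectMap K (compDim d l p) (compDim d (l + 1) p)).comp (LinearMap.proj p)

open Finset Module LinearMap

lemma Icc_succ_right' (a b : ℕ) (h : a ≤ b + 1) :
    Finset.Icc a (b+1) = insert (b+1) (Finset.Icc a b) := by
  ext k; simp only [Finset.mem_Icc, Finset.mem_insert]; omega

lemma Icc_eq_insert_left (a b : ℕ) (h : a ≤ b) :
    Finset.Icc a b = insert a (Finset.Icc (a+1) b) := by
  ext k; simp only [Finset.mem_Icc, Finset.mem_insert]; omega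

noncomputable def gmap (K : Type) [Field K] (m a b : ℕ) : (Fin a → K) →ₗ[K] (Fin b → K) where
  toFun x q := if h : (q : ℕ) < min m a then x ⟨q, h.trans_le (min_le_right m a)⟩ else 0
  map_add' x y := by
    funext q; simp only [Pi.add_apply]; split <;> simp
  map_smul' c x := by
    funext q; simp only [Pi.smul_apply, RingHom.id_apply, smul_eq_mul]; split <;> simp

lemma gmap_apply (K : Type) [Field K] (m a b : ℕ) (x : Fin a → K) (q : Fin b) :
    gmap K m a b x q = if h : (q : ℕ) < min m a then x ⟨q, h.trans_le (min_le_right m a)⟩ else 0 := rfl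

lemma gmap_congr (K : Type) [Field K] {m m' a : ℕ} (b : ℕ)
    (h : min (min m a) b = min (min m' a) b) :
    gmap K m a b = gmap K m' a b := by
  refine LinearMap.ext fun x => funext fun q => ?_
  have hq := q.2
  simp only [gmap_apply]
  by_cases h1 : (q : ℕ) < min m a
  · rw [dif_pos h1, dif_pos (by omega)]
  · rw [dif_neg h1, dif_neg (by omega)]

lemma rectMap_eq_gmap (K : Type) [Field K] (a b : ℕ) : rectMap K a b = gmap K a a b := by
  refine LinearMap.ext fun x => funext fun q => ?_
  simp only [rectMap, Matrix.mulVecLin_apply, Matrix.mulVec, dotProduct, Matrix.of_apply,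
    gmap_apply, min_self, ite_mul, one_mul, zero_mul]
  by_cases h : (q : ℕ) < a
  · rw [Finset.sum_eq_single (⟨q, h⟩ : Fin a)]
    · simp [h]
    · intro r _ hr
      rw [if_neg]
      intro hc
      exact hr (by ext; simp [← hc])
    · simp
  · rw [dif_neg (by omega), Finset.sum_eq_zero]
    intro r _
    rw [if_neg]
    intro hc
    exact h (hc ▸ r.2)

lemma gmap_comp (K : Type) [Field K] (m m' a b c : ℕ) :
    (gmap K m' b c).comp (gmap K m a b) = gmap K (min m (min m' b)) a c := by
  refine LinearMap.ext fun x => funext fun q => ?_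
  simp only [LinearMap.comp_apply, gmap_apply]
  by_cases h1 : (q : ℕ) < min m' b
  · rw [dif_pos h1]
    by_cases h2 : (q : ℕ) < min m a
    · rw [dif_pos h2, dif_pos (by omega)]
    · rw [dif_neg h2, dif_neg (by omega)]
  · rw [dif_neg h1, dif_neg (by omega)]

lemma gmap_surjective (K : Type) [Field K] (a m : ℕ) (h : m ≤ a) :
    Function.Surjective (gmap K a a m) := by
  intro y
  refine ⟨fun r => if h : (r : ℕ) < m then y ⟨r, h⟩ else 0, funext fun q => ?_⟩
  rw [gmap_apply, dif_pos (by omega : (q : ℕ) < min a a)]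
  exact dif_pos q.2

lemma gmap_injective (K : Type) [Field K] (b m : ℕ) (h : m ≤ b) :
    Function.Injective (gmap K m m b) := by
  rw [← LinearMap.ker_eq_bot]
  refine (Submodule.eq_bot_iff _).mpr fun x hx => funext fun r => ?_
  have := congrFun (LinearMap.mem_ker.mp hx) ⟨r, lt_of_lt_of_le r.2 h⟩
  rwa [gmap_apply, dif_pos (by simpa using r.2 : ((⟨r, lt_of_lt_of_le r.2 h⟩ : Fin b) : ℕ) < min m m)] at this

lemma gmap_finrank (K : Type) [Field K] (m a b : ℕ) (hma : m ≤ a) (hmb : m ≤ b) :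
    finrank K (LinearMap.range (gmap K m a b)) = m := by
  have hdecomp : gmap K m a b = (gmap K m m b).comp (gmap K a a m) := by
    rw [gmap_comp, gmap_congr K (m := min a (min m m)) (m' := m) b (by omega)]
  rw [hdecomp, LinearMap.range_comp_of_range_eq_top _
    (LinearMap.range_eq_top.mpr (gmap_surjective K a m hma)),
    LinearMap.finrank_range_of_inj (gmap_injective K b m hmb)]
  simp

section PiRank

variable (K : Type) [Field K] {ι : Type} [Fintype ι] [DecidableEq ι]

/-- `Submodule.pi univ S` is equivalent to the product of the `S i`. -/
noncomputable def submodulePiEquiv (M : ι → Type) [∀ i, AddCommGroup (M i)]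
    [∀ i, Module K (M i)] (S : ∀ i, Submodule K (M i)) :
    (↥(Submodule.pi Set.univ S)) ≃ₗ[K] ∀ i, ↥(S i) where
  toFun x i := ⟨x.1 i, x.2 i (Set.mem_univ i)⟩
  map_add' x y := rfl
  map_smul' c x := rfl
  invFun y := ⟨fun i => (y i).1, fun i _ => (y i).2⟩
  left_inv x := rfl
  right_inv y := rfl

lemma range_pi_comp_proj (np mp : ι → ℕ)
    (f : ∀ p, (Fin (np p) → K) →ₗ[K] (Fin (mp p) → K)) :
    LinearMap.range (LinearMap.pi fun p => (f p).comp (LinearMap.proj p) :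
        (∀ p, Fin (np p) → K) →ₗ[K] (∀ p, Fin (mp p) → K)) =
      Submodule.pi Set.univ (fun p => LinearMap.range (f p)) := by
  ext x
  constructor
  · rintro ⟨y, rfl⟩ p _
    exact ⟨y p, rfl⟩
  · intro hx
    choose y hy using fun p => hx p (Set.mem_univ p)
    exact ⟨y, funext fun p => hy p⟩

lemma finrank_range_pi_comp_proj (np mp : ι → ℕ)
    (f : ∀ p, (Fin (np p) → K) →ₗ[K] (Fin (mp p) → K)) :
    finrank K (LinearMap.range (LinearMap.pi fun p => (f p).comp (LinearMap.proj p) :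
        (∀ p, Fin (np p) → K) →ₗ[K] (∀ p, Fin (mp p) → K))) =
      ∑ p, finrank K (LinearMap.range (f p)) := by
  rw [range_pi_comp_proj, (submodulePiEquiv K (fun p => Fin (mp p) → K) (fun p => LinearMap.range (f p))).finrank_eq, Module.finrank_pi_fintype]

end PiRank

section Comb

variable (d : ℕ → ℤ)

noncomputable def nmin (a b : ℕ) : ℤ :=
  if h : a ≤ b then (Finset.Icc a b).inf' (Finset.nonempty_Icc.mpr h) d else 0

lemma nmin_nonneg (hd : ∀ i, 0 ≤ d i) (a b : ℕ) : 0 ≤ nmin d a b := by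
  unfold nmin
  split
  · exact Finset.le_inf' _ _ fun k _ => hd k
  · exact le_refl _

lemma nmin_le {a b k : ℕ} (h : k ∈ Finset.Icc a b) : nmin d a b ≤ d k := by
  rw [Finset.mem_Icc] at h
  rw [nmin, dif_pos (le_trans h.1 h.2)]
  exact Finset.inf'_le _ (Finset.mem_Icc.mpr h)

lemma nmin_succ_right {a b : ℕ} (h : a ≤ b) :
    nmin d a (b + 1) = min (nmin d a b) (d (b + 1)) := by
  rw [nmin, dif_pos (by omega), nmin, dif_pos h,
    Finset.inf'_congr (H := Finset.nonempty_Icc.mpr (by omega))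
      (Icc_succ_right' a b (by omega)) (fun _ _ => rfl),
    Finset.inf'_insert]
  exact min_comm _ _

lemma nmin_pred_left {a b : ℕ} (ha : 1 ≤ a) (h : a ≤ b) :
    nmin d (a - 1) b = min (d (a - 1)) (nmin d a b) := by
  rw [nmin, dif_pos (by omega), nmin, dif_pos h,
    Finset.inf'_congr (H := Finset.nonempty_Icc.mpr (by omega))
      (show Finset.Icc (a-1) b = insert (a-1) (Finset.Icc a b) by
        ext k; simp only [Finset.mem_Icc, Finset.mem_insert]; omega) (fun _ _ => rfl),
    Finset.inf'_insert]

end Comb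

section Comb2

variable (d : ℕ → ℤ)

lemma rigidMult_cast {a b : ℕ} (ha : 1 ≤ a) (hab : a ≤ b) :
    (rigidMult d a b : ℤ) =
      nmin d a b - nmin d (a - 1) b - nmin d a (b + 1) + nmin d (a - 1) (b + 1) := by
  have hset : {x : ℤ | ∃ k, a ≤ k ∧ k ≤ b ∧
      x = min (d k - d (a - 1)) (d k - d (b + 1))} =
      (fun k => min (d k - d (a - 1)) (d k - d (b + 1))) '' ↑(Finset.Icc a b) := by
    ext x
    simp only [Set.mem_setOf_eq, Set.mem_image, Finset.coe_Icc, Set.mem_Icc]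
    constructor
    · rintro ⟨k, h1, h2, rfl⟩; exact ⟨k, ⟨h1, h2⟩, rfl⟩
    · rintro ⟨k, ⟨h1, h2⟩, rfl⟩; exact ⟨k, h1, h2, rfl⟩
  have hne : (Finset.Icc a b).Nonempty := Finset.nonempty_Icc.mpr hab
  have hsInf : sInf {x : ℤ | ∃ k, a ≤ k ∧ k ≤ b ∧
      x = min (d k - d (a - 1)) (d k - d (b + 1))} =
      (Finset.Icc a b).inf' hne (fun k => min (d k - d (a - 1)) (d k - d (b + 1))) := by
    rw [hset, ← Finset.inf'_eq_csInf_image]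
  set C := max (d (a - 1)) (d (b + 1)) with hC
  have hptw : (Finset.Icc a b).inf' hne (fun k => min (d k - d (a - 1)) (d k - d (b + 1))) =
      (Finset.Icc a b).inf' hne (fun k => d k - C) :=
    Finset.inf'_congr (H := hne) rfl (fun k _ => by rw [hC]; omega)
  have hsub : (Finset.Icc a b).inf' hne (fun k => d k - C) =
      (Finset.Icc a b).inf' hne d - C := by
    have h := map_finset_inf' (⟨fun t => t - C, fun x y => by
      omega⟩ : InfHom ℤ ℤ) hne d
    simpa only [InfHom.coe_mk, Function.comp_def] using h.symm
  have hM : (Finset.Icc a b).inf' hne d = nmin d a b := by rw [nmin, dif_pos hab]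
  have h1 : nmin d (a - 1) b = min (d (a - 1)) (nmin d a b) := nmin_pred_left d ha hab
  have h2 : nmin d a (b + 1) = min (nmin d a b) (d (b + 1)) := nmin_succ_right d hab
  have h3 : nmin d (a - 1) (b + 1) = min (d (a - 1)) (nmin d a (b + 1)) :=
    nmin_pred_left d ha (by omega)
  rw [rigidMult, hsInf, hptw, hsub, hM]
  rw [Int.toNat_of_nonneg (le_max_right _ _)]
  rw [h1, h2, h3, h2, hC]
  omega

lemma tele_right (f : ℕ → ℤ) : ∀ b a, a ≤ b + 1 →
    (∑ k ∈ Finset.Icc a b, (f k - f (k + 1))) = f a - f (b + 1) := by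
  intro b
  induction b with
  | zero =>
    intro a ha
    interval_cases a
    · simp
    · simp [show Finset.Icc 1 0 = ∅ from rfl]
  | succ b ih =>
    intro a ha
    by_cases hab : a ≤ b + 1
    · rw [Icc_succ_right' a b (by omega),
        Finset.sum_insert (by simp only [Finset.mem_Icc, not_and, not_le]; omega), ih a hab]
      ring
    · have : a = b + 2 := by omega
      subst this
      simp [Finset.Icc_eq_empty (by omega : ¬ b + 2 ≤ b + 1)]

lemma tele_left (f : ℕ → ℤ) : ∀ i, (∑ k ∈ Finset.Icc 1 i, (f k - f (k - 1))) = f i - f 0 := by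
  intro i
  induction i with
  | zero => simp [show Finset.Icc 1 0 = ∅ from rfl]
  | succ i ih =>
    rw [Icc_succ_right' 1 i (by omega), Finset.sum_insert (by simp), ih]
    simp only [Nat.add_sub_cancel]
    ring

lemma sum_rigidMult (hd : ∀ i, 0 ≤ d i) (h0 : d 0 = 0) {n i j : ℕ} (hn : d (n + 1) = 0)
    (h1 : 1 ≤ i) (hij : i ≤ j) (hjn : j ≤ n) :
    (∑ a ∈ Finset.Icc 1 i, ∑ b ∈ Finset.Icc j n, (rigidMult d a b : ℤ)) = nmin d i j := by
  have htop : ∀ a, a ≤ n + 1 → nmin d a (n + 1) = 0 := fun a haa =>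
    le_antisymm (le_trans (nmin_le d (Finset.mem_Icc.mpr ⟨haa, le_refl _⟩)) (le_of_eq hn))
      (nmin_nonneg d hd a (n + 1))
  have hbot : ∀ b, nmin d 0 b = 0 := fun b =>
    le_antisymm (le_trans (nmin_le d (Finset.mem_Icc.mpr ⟨le_refl _, by omega⟩)) (le_of_eq h0))
      (nmin_nonneg d hd 0 b)
  have hinner : ∀ a, 1 ≤ a → a ≤ i →
      (∑ b ∈ Finset.Icc j n, (rigidMult d a b : ℤ)) =
        (nmin d a j - nmin d a (n + 1)) - (nmin d (a - 1) j - nmin d (a - 1) (n + 1)) := by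
    intro a ha hai
    have : (∑ b ∈ Finset.Icc j n, (rigidMult d a b : ℤ)) =
        ∑ b ∈ Finset.Icc j n, ((nmin d a b - nmin d (a - 1) b) -
          (nmin d a (b + 1) - nmin d (a - 1) (b + 1))) := by
      refine Finset.sum_congr rfl fun b hb => ?_
      rw [Finset.mem_Icc] at hb
      rw [rigidMult_cast d ha (by omega)]
      ring
    rw [this, tele_right (fun b => nmin d a b - nmin d (a - 1) b) n j (by omega)]
    ring
  have : (∑ a ∈ Finset.Icc 1 i, ∑ b ∈ Finset.Icc j n, (rigidMult d a b : ℤ)) =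
      ∑ a ∈ Finset.Icc 1 i, ((fun t => nmin d t j - nmin d t (n + 1)) a -
        (fun t => nmin d t j - nmin d t (n + 1)) (a - 1)) := by
    refine Finset.sum_congr rfl fun a ha => ?_
    rw [Finset.mem_Icc] at ha
    rw [hinner a ha.1 ha.2]
  rw [this, tele_left (fun t => nmin d t j - nmin d t (n + 1)) i]
  rw [htop i (by omega), hbot j, htop 0 (by omega)]
  ring

end Comb2

section MC

variable (d : ℕ → ℤ)

noncomputable def mc (i j : ℕ) (p : ℕ × ℕ) : ℕ :=
  if h : i ≤ j then (Finset.Icc i j).inf' (Finset.nonempty_Icc.mpr h)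
    (fun l => compDim d l p) else 0

lemma mc_le {i j l : ℕ} (p : ℕ × ℕ) (h : l ∈ Finset.Icc i j) : mc d i j p ≤ compDim d l p := by
  rw [Finset.mem_Icc] at h
  rw [mc, dif_pos (le_trans h.1 h.2)]
  exact Finset.inf'_le _ (Finset.mem_Icc.mpr h)

lemma mc_self (i : ℕ) (p : ℕ × ℕ) : mc d i i p = compDim d i p := by
  rw [mc, dif_pos le_rfl]
  simp

lemma mc_succ {i j : ℕ} (h : i ≤ j) (p : ℕ × ℕ) :
    mc d i (j + 1) p = min (mc d i j p) (compDim d (j + 1) p) := by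
  rw [mc, dif_pos (by omega), mc, dif_pos h,
    Finset.inf'_congr (H := Finset.nonempty_Icc.mpr (by omega))
      (Icc_succ_right' i j (by omega)) (fun _ _ => rfl),
    Finset.inf'_insert]
  exact min_comm _ _

lemma mc_eq {i j : ℕ} (h : i ≤ j) (p : ℕ × ℕ) :
    mc d i j p = if p.1 ≤ i ∧ j ≤ p.2 then rigidMult d p.1 p.2 else 0 := by
  split
  · rename_i hp
    rw [mc, dif_pos h]
    rw [Finset.inf'_congr (H := Finset.nonempty_Icc.mpr h) rfl
      (g := fun _ => rigidMult d p.1 p.2) (fun l hl => ?_), Finset.inf'_const]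
    rw [Finset.mem_Icc] at hl
    rw [compDim, if_pos ⟨by omega, by omega⟩]
  · rename_i hp
    refine Nat.le_antisymm ?_ (Nat.zero_le _)
    rcases not_and_or.mp hp with hp1 | hp2
    · exact le_trans (mc_le d p (Finset.mem_Icc.mpr ⟨le_rfl, h⟩))
        (le_of_eq (by rw [compDim, if_neg (by omega)]))
    · exact le_trans (mc_le d p (Finset.mem_Icc.mpr ⟨h, le_rfl⟩))
        (le_of_eq (by rw [compDim, if_neg (by omega)]))

end MC

lemma g_formula (K : Type) [Field K] (n : ℕ) (d : ℕ → ℤ)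
    (g : ∀ i j, rigidSpace K n d i →ₗ[K] rigidSpace K n d j)
    (hgi : ∀ i, g i i = LinearMap.id)
    (hgs : ∀ i j, i ≤ j → g i (j + 1) = (rigidStructMap K n d j).comp (g i j))
    (i : ℕ) : ∀ j, i ≤ j →
    g i j = LinearMap.pi (fun p : ↥(Finset.Icc 1 n ×ˢ Finset.Icc 1 n) =>
      (gmap K (mc d i j ↑p) (compDim d i ↑p) (compDim d j ↑p)).comp
        (LinearMap.proj p : rigidSpace K n d i →ₗ[K] (Fin (compDim d i ↑p) → K))) := by
  refine Nat.le_induction ?_ ?_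
  · rw [hgi i]
    refine LinearMap.ext fun x => funext fun p => funext fun q => ?_
    symm
    change gmap K (mc d i i ↑p) (compDim d i ↑p) (compDim d i ↑p) (x p) q = x p q
    rw [gmap_apply, dif_pos (by rw [mc_self]; simpa using q.2)]
  · intro j hij ih
    rw [hgs i j hij, ih, rigidStructMap]
    refine LinearMap.ext fun x => funext fun p => ?_
    change (rectMap K (compDim d j ↑p) (compDim d (j + 1) ↑p))
        (gmap K (mc d i j ↑p) (compDim d i ↑p) (compDim d j ↑p) (x p)) =
      gmap K (mc d i (j + 1) ↑p) (compDim d i ↑p) (compDim d (j + 1) ↑p) (x p)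
    have h1 : mc d i j ↑p ≤ compDim d j ↑p :=
      mc_le d _ (Finset.mem_Icc.mpr ⟨hij, le_rfl⟩)
    have h2 : mc d i (j + 1) ↑p = min (mc d i j ↑p) (compDim d (j + 1) ↑p) :=
      mc_succ d hij ↑p
    have hmap : (rectMap K (compDim d j ↑p) (compDim d (j + 1) ↑p)).comp
        (gmap K (mc d i j ↑p) (compDim d i ↑p) (compDim d j ↑p)) =
        gmap K (mc d i (j + 1) ↑p) (compDim d i ↑p) (compDim d (j + 1) ↑p) := by
      rw [rectMap_eq_gmap, gmap_comp]
      exact gmap_congr K _ (by simp only [min_self]; rw [h2]; omega)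
    exact DFunLike.congr_fun hmap (x p)

/-- The representation `V = ⊕ U_{i,j}^{m_{ij}}` built from the piecewise-linear formula for
the rigid representation of the equioriented `Aₙ` quiver attains the maximal ranks: the
composition `V_i → V_j` (encoded by `g` with `g i i = id`, `g i (j+1) = f j ∘ g i j`) has
rank `min {d_i, …, d_j}` for all `1 ≤ i ≤ j ≤ n`. -/
theorem rigid_rep_rank_eq_min (K : Type) [Field K] (n : ℕ) (d : ℕ → ℤ)
    (hd : ∀ i, 0 ≤ d i) (h0 : d 0 = 0) (hn : d (n + 1) = 0)
    (g : ∀ i j, rigidSpace K n d i →ₗ[K] rigidSpace K n d j)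
    (hgi : ∀ i, g i i = LinearMap.id)
    (hgs : ∀ i j, i ≤ j → g i (j + 1) = (rigidStructMap K n d j).comp (g i j))
    (i j : ℕ) (h1 : 1 ≤ i) (hij : i ≤ j) (hjn : j ≤ n) :
    (Module.finrank K (LinearMap.range (g i j)) : ℤ) =
      (Finset.Icc i j).inf' (Finset.nonempty_Icc.mpr hij) d := by
  have hfr : Module.finrank K (LinearMap.range (g i j)) =
      ∑ p : ↥(Finset.Icc 1 n ×ˢ Finset.Icc 1 n), mc d i j ↑p := by
    rw [g_formula K n d g hgi hgs i j hij]
    refine (finrank_range_pi_comp_proj K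
      (fun p : ↥(Finset.Icc 1 n ×ˢ Finset.Icc 1 n) => compDim d i ↑p)
      (fun p : ↥(Finset.Icc 1 n ×ˢ Finset.Icc 1 n) => compDim d j ↑p)
      (fun p => gmap K (mc d i j ↑p) (compDim d i ↑p) (compDim d j ↑p))).trans ?_
    exact Finset.sum_congr rfl fun p _ => gmap_finrank K _ _ _
      (mc_le d _ (Finset.mem_Icc.mpr ⟨le_rfl, hij⟩))
      (mc_le d _ (Finset.mem_Icc.mpr ⟨hij, le_rfl⟩))
  have key : (∑ p : ↥(Finset.Icc 1 n ×ˢ Finset.Icc 1 n), (mc d i j ↑p : ℤ)) = nmin d i j := by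
    rw [Finset.sum_coe_sort (Finset.Icc 1 n ×ˢ Finset.Icc 1 n) (fun p => (mc d i j p : ℤ)),
      Finset.sum_product]
    have step1 : (∑ a ∈ Finset.Icc 1 n, ∑ b ∈ Finset.Icc 1 n, (mc d i j (a, b) : ℤ)) =
        ∑ a ∈ Finset.Icc 1 n, (if a ≤ i then
          ∑ b ∈ Finset.Icc 1 n, (if j ≤ b then (rigidMult d a b : ℤ) else 0) else 0) := by
      refine Finset.sum_congr rfl fun a _ => ?_
      by_cases hai : a ≤ i
      · rw [if_pos hai]
        refine Finset.sum_congr rfl fun b _ => ?_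
        rw [mc_eq d hij]
        by_cases hjb : j ≤ b
        · rw [if_pos hjb, if_pos ⟨hai, hjb⟩]
        · rw [if_neg hjb, if_neg (fun hc => hjb hc.2)]
          simp
      · rw [if_neg hai, Finset.sum_eq_zero]
        intro b _
        rw [mc_eq d hij, if_neg (fun hc => hai hc.1)]
        simp
    rw [step1]
    have step2 : ∀ F : ℕ → ℤ, (∑ a ∈ Finset.Icc 1 n, (if a ≤ i then F a else 0)) =
        ∑ a ∈ Finset.Icc 1 i, F a := by
      intro F
      rw [← Finset.sum_filter]
      refine Finset.sum_congr ?_ fun _ _ => rfl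
      ext k
      simp only [Finset.mem_filter, Finset.mem_Icc]
      omega
    rw [step2]
    have step4 : ∀ a, (∑ b ∈ Finset.Icc 1 n, (if j ≤ b then (rigidMult d a b : ℤ) else 0)) =
        ∑ b ∈ Finset.Icc j n, (rigidMult d a b : ℤ) := by
      intro a
      rw [← Finset.sum_filter]
      refine Finset.sum_congr ?_ fun _ _ => rfl
      ext k
      simp only [Finset.mem_filter, Finset.mem_Icc]
      omega
    rw [Finset.sum_congr rfl fun a _ => step4 a]
    exact sum_rigidMult d hd h0 hn h1 hij hjn
  rw [hfr, Nat.cast_sum, key, nmin, dif_pos hij]
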